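/- arXiv:2012.15034 — 3 statements merged into one kernel-verified Lean document; each statement's English description precedes it below -/
import Mathlib

section
/- Let G be a finite DAG with edge weights in a commutative ring and let z be an intermediate vertex (neither a source nor a sink) with u ≠ z ≠ v. Then the sum of weighted path-products from u to v in G equals the sum of weighted path-products from u to v in the graph G' obtained by eliminating z: delete z and, for every pair (p, s) with p a predecessor of z and s a successor of z, add a new edge from p to s with weight c(p,z)·c(z,s). -/
open scoped Classical

def IsPath {V : Type*} (E : V → V → Prop) (u v : V) (l : List V) : Prop :=
  l ≠ [] ∧ l.Chain' E ∧ l.head? = some u ∧ l.getLast? = some v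

def pathWeight {V R : Type*} [CommRing R] (c : V → V → R) (l : List V) : R :=
  ((l.zip l.tail).map fun p => c p.1 p.2).prod

noncomputable def pathSum {V R : Type*} [CommRing R] (E : V → V → Prop) (c : V → V → R)
    (u v : V) : R :=
  ∑ᶠ l ∈ {l : List V | IsPath E u v l}, pathWeight c l

section Aux

open Relation

variable {V R : Type*} [CommRing R]

lemma transGen_of_chain'_mem {E : V → V → Prop} :
    ∀ {l : List V} {a b : V}, List.Chain' E (a :: l) → b ∈ l → TransGen E a b := by
  intro l
  induction l with
  | nil => intro a b _ hb; simp at hb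
  | cons c t ih =>
    intro a b h hb
    have hac : E a c := (List.isChain_cons_cons.mp h).1
    rcases List.mem_cons.mp hb with rfl | hb
    · exact TransGen.single hac
    · exact TransGen.head hac (ih h.tail hb)

lemma nodup_of_chain' {E : V → V → Prop} (hacyc : ∀ a, ¬ TransGen E a a) :
    ∀ {l : List V}, List.Chain' E l → l.Nodup := by
  intro l
  induction l with
  | nil => simp
  | cons a t ih =>
    intro h
    exact List.nodup_cons.mpr
      ⟨fun hmem => hacyc a (transGen_of_chain'_mem h hmem), ih h.tail⟩

lemma isPath_finite [Fintype V] {E : V → V → Prop} (hacyc : ∀ a, ¬ TransGen E a a)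
    (u v : V) : {l : List V | IsPath E u v l}.Finite := by
  apply (List.finite_length_le V (Fintype.card V)).subset
  intro l hl
  exact (nodup_of_chain' hacyc hl.2.1).length_le_card

lemma pathWeight_singleton (c : V → V → R) (a : V) : pathWeight c [a] = 1 := by
  simp [pathWeight]

lemma pathWeight_cons_cons (c : V → V → R) (a b : V) (l : List V) :
    pathWeight c (a :: b :: l) = c a b * pathWeight c (b :: l) := by
  simp [pathWeight]

lemma IsPath.exists_cons {E : V → V → Prop} {u v : V} {l : List V}
    (h : IsPath E u v l) : ∃ t, l = u :: t := by
  obtain ⟨hne, -, hh, -⟩ := h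
  cases l with
  | nil => exact absurd rfl hne
  | cons a t =>
    simp only [List.head?_cons, Option.some.injEq] at hh
    exact ⟨t, by rw [hh]⟩

lemma isPath_iff {E : V → V → Prop} {u v : V} {l : List V} :
    IsPath E u v l ↔ (u = v ∧ l = [u]) ∨
      ∃ w l', E u w ∧ IsPath E w v l' ∧ l = u :: l' := by
  constructor
  · rintro ⟨hne, hchain, hhead, hlast⟩
    match l with
    | [] => exact absurd rfl hne
    | [a] =>
      simp only [List.head?_cons, Option.some.injEq] at hhead
      simp only [List.getLast?_singleton, Option.some.injEq] at hlast
      exact Or.inl ⟨hhead ▸ hlast ▸ rfl, by rw [hhead]⟩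
    | a :: b :: t =>
      simp only [List.head?_cons, Option.some.injEq] at hhead
      subst hhead
      refine Or.inr ⟨b, b :: t, (List.isChain_cons_cons.mp hchain).1,
        ⟨by simp, (List.isChain_cons_cons.mp hchain).2, rfl, ?_⟩, rfl⟩
      rwa [List.getLast?_cons_cons] at hlast
  · rintro (⟨rfl, rfl⟩ | ⟨w, l', hE, hP, rfl⟩)
    · exact ⟨by simp, List.isChain_singleton _, rfl, rfl⟩
    · obtain ⟨t, rfl⟩ := hP.exists_cons
      obtain ⟨-, hch, -, hlast⟩ := hP
      exact ⟨by simp, List.isChain_cons_cons.mpr ⟨hE, hch⟩, rfl,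
        by rwa [List.getLast?_cons_cons]⟩

lemma mem_ite_finset {α : Type*} {P : Prop} [Decidable P] {s : Finset α} {a : α} :
    (a ∈ if P then s else (∅ : Finset α)) ↔ P ∧ a ∈ s := by
  split_ifs with h <;> simp [h]

lemma pathSum_rec [Fintype V] {E : V → V → Prop}
    (hacyc : ∀ a, ¬ TransGen E a a) (c : V → V → R) (u v : V) :
    pathSum E c u v = (if u = v then 1 else 0) +
      ∑ w : V, if E u w then c u w * pathSum E c w v else 0 := by
  classical
  have hfin : ∀ x y : V, {l : List V | IsPath E x y l}.Finite :=
    fun x y => isPath_finite hacyc x y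
  have hps : ∀ x y : V, pathSum E c x y = ∑ l ∈ (hfin x y).toFinset, pathWeight c l := by
    intro x y
    rw [pathSum, ← finsum_mem_coe_finset, Set.Finite.coe_toFinset]
  have hset : (hfin u v).toFinset =
      (if u = v then ({[u]} : Finset (List V)) else ∅) ∪
        Finset.univ.biUnion
          (fun w => if E u w then ((hfin w v).toFinset.image (u :: ·)) else ∅) := by
    ext l
    simp only [Set.Finite.mem_toFinset, Set.mem_setOf_eq, Finset.mem_union,
      Finset.mem_biUnion, Finset.mem_univ, true_and, mem_ite_finset,
      Finset.mem_image, Finset.mem_singleton]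
    rw [isPath_iff]
    constructor
    · rintro (⟨h1, h2⟩ | ⟨w, l', hE, hP, rfl⟩)
      · exact Or.inl ⟨h1, h2⟩
      · exact Or.inr ⟨w, hE, l', hP, rfl⟩
    · rintro (⟨h1, h2⟩ | ⟨w, hE, l', hP, rfl⟩)
      · exact Or.inl ⟨h1, h2⟩
      · exact Or.inr ⟨w, l', hE, hP, rfl⟩
  have hdisj : Disjoint (if u = v then ({[u]} : Finset (List V)) else ∅)
      (Finset.univ.biUnion
        (fun w => if E u w then ((hfin w v).toFinset.image (u :: ·)) else ∅)) := by
    rw [Finset.disjoint_left]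
    intro l hl hl2
    rw [mem_ite_finset, Finset.mem_singleton] at hl
    obtain ⟨-, rfl⟩ := hl
    rw [Finset.mem_biUnion] at hl2
    obtain ⟨w, -, hw⟩ := hl2
    rw [mem_ite_finset, Finset.mem_image] at hw
    obtain ⟨-, l', hl', heq⟩ := hw
    have hne : l' ≠ [] := ((hfin w v).mem_toFinset.mp hl').1
    simp only [List.cons.injEq] at heq
    exact hne heq.2
  have hpd : ((Finset.univ : Finset V) : Set V).PairwiseDisjoint
      (fun w => if E u w then ((hfin w v).toFinset.image (u :: ·)) else ∅) := by
    intro w1 _ w2 _ hne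
    simp only [Function.onFun]
    rw [Finset.disjoint_left]
    intro l h1 h2
    rw [mem_ite_finset, Finset.mem_image] at h1 h2
    obtain ⟨-, l1, hl1, rfl⟩ := h1
    obtain ⟨-, l2, hl2, heq⟩ := h2
    simp only [List.cons.injEq, true_and] at heq
    subst heq
    obtain ⟨t1, rfl⟩ := ((hfin w2 v).mem_toFinset.mp hl2).exists_cons
    have := ((hfin w1 v).mem_toFinset.mp hl1).2.2.1
    simp only [List.head?_cons, Option.some.injEq] at this
    exact hne (this.symm)
  rw [hps, hset, Finset.sum_union hdisj, Finset.sum_biUnion hpd]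
  congr 1
  · split_ifs with h
    · simp [pathWeight_singleton]
    · simp
  · refine Finset.sum_congr rfl fun w _ => ?_
    split_ifs with h
    · rw [Finset.sum_image (by intro a _ b _ hab; simpa using hab)]
      rw [hps w v, Finset.mul_sum]
      refine Finset.sum_congr rfl fun l hl => ?_
      obtain ⟨t, rfl⟩ := ((hfin w v).mem_toFinset.mp hl).exists_cons
      rw [pathWeight_cons_cons]
    · simp

end Aux

/-- Correctness of vertex elimination: eliminating an intermediate vertex `z`
(deleting `z` and adding, for each predecessor `p` and successor `s` of `z`, an edge
`p → s` with weight `c p z * c z s`, added to the weight of a pre-existing edge)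
preserves the path sum between any two vertices `u ≠ z ≠ v`. -/
theorem stmt2 {V R : Type*} [Fintype V] [CommRing R] (E : V → V → Prop)
    (hacyc : ∀ a : V, ¬ Relation.TransGen E a a) (c : V → V → R)
    (z u v : V) (hz_in : ∃ p, E p z) (hz_out : ∃ s, E z s)
    (huz : u ≠ z) (hvz : v ≠ z) :
    pathSum (fun a b => (E a b ∧ a ≠ z ∧ b ≠ z) ∨ (E a z ∧ E z b))
      (fun a b => (if E a b ∧ a ≠ z ∧ b ≠ z then c a b else 0) +
        (if E a z ∧ E z b then c a z * c z b else 0)) u v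
      = pathSum E c u v := by
  classical
  set E' : V → V → Prop := fun a b => (E a b ∧ a ≠ z ∧ b ≠ z) ∨ (E a z ∧ E z b) with hE'
  set c' : V → V → R := fun a b => (if E a b ∧ a ≠ z ∧ b ≠ z then c a b else 0) +
        (if E a z ∧ E z b then c a z * c z b else 0) with hc'
  have hsub : ∀ a b, E' a b → Relation.TransGen E a b := by
    rintro a b (⟨h, -, -⟩ | ⟨h1, h2⟩)
    · exact Relation.TransGen.single h
    · exact Relation.TransGen.head h1 (Relation.TransGen.single h2)
  have hacyc' : ∀ a, ¬ Relation.TransGen E' a a := by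
    intro a h
    have h2 : Relation.TransGen (Relation.TransGen E) a a := Relation.TransGen.mono hsub a a h
    rw [Relation.transGen_idem] at h2
    exact hacyc a h2
  -- z ≠ v
  have hzv : z ≠ v := fun h => hvz h.symm
  -- well-founded relation: successors
  have hwf : WellFounded (fun a b : V => Relation.TransGen E b a) := by
    haveI : IsTrans V (fun a b : V => Relation.TransGen E b a) :=
      ⟨fun a b c hab hbc => Relation.TransGen.trans hbc hab⟩
    haveI : IsIrrefl V (fun a b : V => Relation.TransGen E b a) :=
      ⟨fun a h => hacyc a h⟩
    exact Finite.wellFounded_of_trans_of_irrefl _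
  suffices H : ∀ x : V, x ≠ z → pathSum E' c' x v = pathSum E c x v from H u huz
  intro x
  induction x using hwf.induction with
  | _ x IH =>
  intro hxz
  rw [pathSum_rec hacyc' c' x v, pathSum_rec hacyc c x v]
  congr 1
  have hzrec : ∑ w : V, (if E z w then c z w * pathSum E c w v else 0) = pathSum E c z v := by
    rw [pathSum_rec hacyc c z v, if_neg hzv, zero_add]
  have hstep : ∀ w : V, (@ite R (E' x w) (Classical.propDecidable _)
        (c' x w * pathSum E' c' w v) 0)
      = (if E x w ∧ w ≠ z then c x w * pathSum E c w v else 0)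
        + (if E x z ∧ E z w then c x z * (c z w * pathSum E c w v) else 0) := by
    intro w
    by_cases h : E' x w
    · have hwz : w ≠ z := by
        rcases h with ⟨-, -, h⟩ | ⟨-, hzw⟩
        · exact h
        · intro hh
          rw [hh] at hzw
          exact hacyc z (Relation.TransGen.single hzw)
      have hps : pathSum E' c' w v = pathSum E c w v := IH w (hsub _ _ h) hwz
      have e1 : (if E x w ∧ x ≠ z ∧ w ≠ z then c x w else 0) * pathSum E c w v
          = (if E x w ∧ w ≠ z then c x w * pathSum E c w v else 0) := by
        by_cases hA : E x w <;> simp [hA, hxz, hwz]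
      have e2 : (if E x z ∧ E z w then c x z * c z w else 0) * pathSum E c w v
          = (if E x z ∧ E z w then c x z * (c z w * pathSum E c w v) else 0) := by
        by_cases hB : E x z ∧ E z w <;> simp [hB, mul_assoc]
      rw [if_pos h, hps]
      simp only [hc']
      rw [add_mul, e1, e2]
    · have h1 : ¬(E x w ∧ w ≠ z) := fun hh => h (Or.inl ⟨hh.1, hxz, hh.2⟩)
      have h2 : ¬(E x z ∧ E z w) := fun hh => h (Or.inr hh)
      rw [if_neg h, if_neg h1, if_neg h2, add_zero]
  rw [Finset.sum_congr rfl fun w _ => hstep w]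
  calc ∑ w : V, ((if E x w ∧ w ≠ z then c x w * pathSum E c w v else 0)
          + (if E x z ∧ E z w then c x z * (c z w * pathSum E c w v) else 0))
      = (∑ w : V, if E x w ∧ w ≠ z then c x w * pathSum E c w v else 0)
          + (∑ w : V, if E x z ∧ E z w then c x z * (c z w * pathSum E c w v) else 0) :=
        Finset.sum_add_distrib
    _ = (∑ w : V, if E x w ∧ w ≠ z then c x w * pathSum E c w v else 0)
          + (if E x z then c x z * pathSum E c z v else 0) := by
        congr 1
        by_cases hxez : E x z
        · simp only [hxez, true_and, if_true]
          rw [← hzrec, Finset.mul_sum]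
          refine Finset.sum_congr rfl fun w _ => ?_
          split_ifs with h <;> simp
        · simp [hxez]
    _ = ∑ w : V, (if E x w then c x w * pathSum E c w v else 0) := by
        have : ∀ w : V, (if E x w then c x w * pathSum E c w v else 0)
            = (if E x w ∧ w ≠ z then c x w * pathSum E c w v else 0)
              + (if w = z then (if E x z then c x z * pathSum E c z v else 0) else 0) := by
          intro w
          by_cases hw : w = z
          · subst hw
            by_cases hE : E x w <;> simp [hE]
          · by_cases hE : E x w <;> simp [hE, hw]
        rw [Finset.sum_congr rfl fun w _ => this w, Finset.sum_add_distrib]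
        congr 1
        rw [Finset.sum_ite_eq' Finset.univ z
          (fun _ => if E x z then c x z * pathSum E c z v else 0)]
        simp
end

section
/- Segmenting a cross-level edge preserves path sums: if G' is obtained from a weighted DAG G by replacing an edge (u,v) of weight w with a path u → z₁ → … → z_k → v through new vertices, where one edge of the new path has weight w and all others have weight 1, then for all original vertices a, b, the sum over paths from a to b of products of edge weights is the same in G and G'. -/
/-- The edge relation of the segmented graph: the edge `u → v` is replaced by the chain
`u → z₀ → z₁ → ⋯ → z_{k-1} → v` through `k` new vertices. -/
def segE {V : Type*} (E : V → V → Prop) (u v : V) (k : ℕ) :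
    V ⊕ Fin k → V ⊕ Fin k → Prop
  | Sum.inl a, Sum.inl b => E a b ∧ ¬(a = u ∧ b = v)
  | Sum.inl a, Sum.inr i => a = u ∧ (i : ℕ) = 0
  | Sum.inr i, Sum.inr j => (j : ℕ) = (i : ℕ) + 1
  | Sum.inr i, Sum.inl b => (i : ℕ) = k - 1 ∧ b = v

/-- The weights of the segmented graph: original edges keep their weights, and the `k+1`
edges of the new chain carry the weights `w 0, w 1, …, w k`. -/
def segC {V R : Type*} {k : ℕ} (c : V → V → R) (w : Fin (k + 1) → R) :
    V ⊕ Fin k → V ⊕ Fin k → R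
  | Sum.inl a, Sum.inl b => c a b
  | Sum.inl _, Sum.inr _ => w 0
  | Sum.inr i, _ => w i.succ

namespace SegAux

attribute [local instance] Classical.propDecidable

open Classical in
noncomputable def expandL {V : Type*} (u v : V) (k : ℕ) : List V → List (V ⊕ Fin k)
  | [] => []
  | [a] => [Sum.inl a]
  | a :: b :: rest =>
      Sum.inl a ::
        ((if a = u ∧ b = v then (List.finRange k).map Sum.inr else []) ++
          expandL u v k (b :: rest))

variable {V : Type*} {R : Type*} [CommRing R] {E : V → V → Prop} {u v : V} {k : ℕ}

lemma expandL_ne_nil (a : V) (l : List V) : expandL u v k (a :: l) ≠ [] := by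
  cases l <;> simp [expandL]

lemma expandL_head? (l : List V) :
    (expandL u v k l).head? = l.head?.map Sum.inl := by
  cases l with
  | nil => simp [expandL]
  | cons a t => cases t <;> simp [expandL]

lemma expandL_getLast? (l : List V) :
    (expandL u v k l).getLast? = l.getLast?.map Sum.inl := by
  induction l with
  | nil => simp [expandL]
  | cons a t ih =>
    cases t with
    | nil => simp [expandL]
    | cons b s =>
      have h1 : expandL u v k (a :: b :: s)
          = (Sum.inl a :: (if a = u ∧ b = v then (List.finRange k).map Sum.inr else []))
            ++ expandL u v k (b :: s) := by
        simp [expandL]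
      rw [h1, List.getLast?_append_of_ne_nil _ (expandL_ne_nil b s), ih,
        List.getLast?_cons_cons]

lemma chain_head? (hk : 0 < k) :
    (((List.finRange k).map Sum.inr : List (V ⊕ Fin k))).head? = some (Sum.inr ⟨0, hk⟩) := by
  rw [List.head?_eq_getElem?]
  have hlen : 0 < ((List.finRange k).map (Sum.inr : Fin k → V ⊕ Fin k)).length := by simpa
  rw [List.getElem?_eq_getElem hlen]
  simp [List.getElem_finRange]

lemma chain_getLast? (hk : 0 < k) :
    (((List.finRange k).map Sum.inr : List (V ⊕ Fin k))).getLast?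
      = some (Sum.inr ⟨k - 1, by omega⟩) := by
  rw [List.getLast?_eq_getElem?]
  have hlen : k - 1 < ((List.finRange k).map (Sum.inr : Fin k → V ⊕ Fin k)).length := by
    simp; omega
  rw [show ((List.finRange k).map (Sum.inr : Fin k → V ⊕ Fin k)).length - 1 = k - 1 by simp]
  rw [List.getElem?_eq_getElem hlen]
  simp [List.getElem_finRange]

lemma chain_chain' :
    (((List.finRange k).map Sum.inr : List (V ⊕ Fin k))).Chain' (segE E u v k) := by
  rw [List.Chain', List.isChain_map]
  rw [List.isChain_iff_getElem]
  intro i h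
  simp only [List.get_eq_getElem, List.getElem_finRange]
  show (_ : ℕ) = _ + 1
  simp

lemma chain'_expandL (hk : 0 < k) :
    ∀ l : List V, l.Chain' E → (expandL u v k l).Chain' (segE E u v k) := by
  intro l
  induction l with
  | nil => intro _; simp [expandL, List.Chain']
  | cons a t ih =>
    intro hc
    cases t with
    | nil => simp [expandL, List.Chain']
    | cons b s =>
      rw [List.Chain', List.isChain_cons_cons] at hc
      obtain ⟨hab, hc⟩ := hc
      have ihs := ih hc
      have hhead : (expandL u v k (b :: s)).head? = some (Sum.inl b) := by
        rw [expandL_head?]; rfl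
      show List.Chain' _ (Sum.inl a ::
        ((if a = u ∧ b = v then (List.finRange k).map Sum.inr else []) ++
          expandL u v k (b :: s)))
      by_cases h : a = u ∧ b = v
      · rw [if_pos h, List.Chain', List.isChain_cons]
        constructor
        · intro y hy
          rw [List.head?_append_of_ne_nil, chain_head? hk] at hy
          · cases hy
            exact ⟨h.1, rfl⟩
          · simp [List.ne_nil_of_length_pos, hk]
        · rw [List.isChain_append]
          refine ⟨chain_chain', ihs, ?_⟩
          intro x hx y hy
          rw [chain_getLast? hk] at hx
          rw [hhead] at hy
          cases hx; cases hy
          exact ⟨rfl, h.2⟩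
      · rw [if_neg h, List.nil_append, List.Chain', List.isChain_cons]
        refine ⟨?_, ihs⟩
        intro y hy
        rw [hhead] at hy
        cases hy
        exact ⟨hab, h⟩

lemma segPath_inr (b : V) :
    ∀ (t : List (V ⊕ Fin k)) (i : Fin k),
      (Sum.inr i :: t).Chain' (segE E u v k) →
      (Sum.inr i :: t).getLast? = some (Sum.inl b) →
      ∃ t', Sum.inr i :: t
          = ((List.finRange k).drop i.val).map Sum.inr ++ (Sum.inl v :: t')
        ∧ (Sum.inl v :: t' : List (V ⊕ Fin k)).Chain' (segE E u v k)
        ∧ (Sum.inl v :: t').getLast? = some (Sum.inl b) := by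
  intro t
  induction t with
  | nil => intro i hc hl; simp at hl
  | cons x t ih =>
    intro i hc hl
    have hdrop : (List.finRange k).drop i.val = i :: (List.finRange k).drop (i.val + 1) := by
      rw [List.drop_eq_getElem_cons (by simp [i.isLt])]
      congr 1
      simp [List.getElem_finRange]
    rw [List.Chain', List.isChain_cons_cons] at hc
    obtain ⟨hxy, hc⟩ := hc
    cases x with
    | inl b' =>
      obtain ⟨hi, hb'⟩ := hxy
      subst hb'
      have hdrop2 : (List.finRange k).drop (i.val + 1) = [] := by
        apply List.drop_eq_nil_of_le
        simp; omega
      refine ⟨t, ?_, hc, ?_⟩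
      · rw [hdrop, hdrop2]; rfl
      · rw [List.getLast?_cons_cons] at hl; exact hl
    | inr j =>
      have hj : (j : ℕ) = (i : ℕ) + 1 := hxy
      rw [List.getLast?_cons_cons] at hl
      obtain ⟨t', heq, hc', hl'⟩ := ih j hc hl
      refine ⟨t', ?_, hc', hl'⟩
      rw [hdrop]
      have : (i : ℕ) + 1 = (j : ℕ) := hj.symm
      rw [this, List.map_cons, List.cons_append, heq]

lemma segPath_surj (hk : 0 < k) (huv : E u v) :
    ∀ (n : ℕ) (l' : List (V ⊕ Fin k)) (a b : V), l'.length ≤ n →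
      l'.Chain' (segE E u v k) → l'.head? = some (Sum.inl a) →
      l'.getLast? = some (Sum.inl b) →
      ∃ l : List V, IsPath E a b l ∧ expandL u v k l = l' := by
  intro n
  induction n with
  | zero =>
    intro l' a b hlen hc hh hl
    have : l' = [] := List.eq_nil_of_length_eq_zero (Nat.le_zero.mp hlen)
    subst this; simp at hh
  | succ n ih =>
    intro l' a b hlen hc hh hl
    cases l' with
    | nil => simp at hh
    | cons x t =>
      have hx : x = Sum.inl a := by simpa using hh
      subst hx
      cases t with
      | nil =>
        have hb : a = b := by simpa using hl
        subst hb
        exact ⟨[a], ⟨by simp, by simp [List.Chain'], rfl, rfl⟩, rfl⟩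
      | cons y t =>
        rw [List.Chain', List.isChain_cons_cons] at hc
        obtain ⟨hay, hc⟩ := hc
        rw [List.getLast?_cons_cons] at hl
        cases y with
        | inl b'' =>
          obtain ⟨hE, hne⟩ := hay
          obtain ⟨l, hP, hexp⟩ := ih (Sum.inl b'' :: t) b'' b (by simpa using hlen) hc rfl hl
          obtain ⟨hne', hch, hhd, hlst⟩ := hP
          cases l with
          | nil => simp at hhd
          | cons b₀ l₂ =>
            have hb₀ : b₀ = b'' := by simpa using hhd
            subst hb₀
            refine ⟨a :: b₀ :: l₂, ⟨by simp, ?_, rfl, by rwa [List.getLast?_cons_cons]⟩, ?_⟩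
            · rw [List.Chain', List.isChain_cons_cons]; exact ⟨hE, hch⟩
            · show Sum.inl a :: ((if a = u ∧ b₀ = v then _ else []) ++ _) = _
              rw [if_neg hne, List.nil_append, hexp]
        | inr i =>
          obtain ⟨hau, hi0⟩ := hay
          subst hau
          obtain ⟨t', heq, hc', hl'⟩ := segPath_inr b t i hc hl
          have hi : i.val = 0 := hi0
          rw [hi, List.drop_zero] at heq
          have hlen' : (Sum.inl v :: t' : List (V ⊕ Fin k)).length ≤ n := by
            have hL := congrArg List.length heq
            simp at hL hlen ⊢
            omega
          obtain ⟨l, hP, hexp⟩ := ih (Sum.inl v :: t') v b hlen' hc' rfl hl'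
          obtain ⟨hne', hch, hhd, hlst⟩ := hP
          cases l with
          | nil => simp at hhd
          | cons v₀ l₂ =>
            have hv : v₀ = v := by simpa using hhd
            subst hv
            refine ⟨a :: v₀ :: l₂, ⟨by simp, ?_, rfl, by rwa [List.getLast?_cons_cons]⟩, ?_⟩
            · rw [List.Chain', List.isChain_cons_cons]; exact ⟨huv, hch⟩
            · show Sum.inl a :: ((if a = a ∧ v₀ = v₀ then (List.finRange k).map Sum.inr else []) ++ _) = _
              rw [if_pos ⟨rfl, rfl⟩, hexp, heq]

lemma pathWeight_cons_cons {W : Type*} (c : W → W → R) (a b : W) (l : List W) :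
    pathWeight c (a :: b :: l) = c a b * pathWeight c (b :: l) := by
  simp [pathWeight]

lemma pathWeight_cons_of_head? {W : Type*} (c : W → W → R) (x y : W) (l : List W)
    (h : l.head? = some y) : pathWeight c (x :: l) = c x y * pathWeight c l := by
  cases l with
  | nil => simp at h
  | cons z t =>
    have hz : z = y := by simpa using h
    subst hz
    exact pathWeight_cons_cons c x z t

lemma segC_inr (c : V → V → R) (w : Fin (k + 1) → R) (i : Fin k) (y : V ⊕ Fin k) :
    segC c w (Sum.inr i) y = w i.succ := by
  cases y <;> rfl

lemma pathWeight_chainseg (c : V → V → R) (w : Fin (k + 1) → R) :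
    ∀ (s : List (Fin k)) (z : V ⊕ Fin k) (t : List (V ⊕ Fin k)),
      pathWeight (segC c w) (s.map Sum.inr ++ z :: t)
        = (s.map fun i => w i.succ).prod * pathWeight (segC c w) (z :: t) := by
  intro s
  induction s with
  | nil => intro z t; simp
  | cons i s ih =>
    intro z t
    obtain ⟨y, hy⟩ : ∃ y, (s.map (Sum.inr : Fin k → V ⊕ Fin k) ++ z :: t).head? = some y := by
      cases s <;> exact ⟨_, rfl⟩
    rw [List.map_cons, List.cons_append, pathWeight_cons_of_head? _ _ y _ hy, segC_inr, ih]
    simp [mul_assoc]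

lemma pathWeight_expandL (hk : 0 < k) (c : V → V → R) (w : Fin (k + 1) → R)
    (hprod : ∏ j, w j = c u v) :
    ∀ l : List V, pathWeight (segC c w) (expandL u v k l) = pathWeight c l := by
  intro l
  induction l with
  | nil => simp [expandL, pathWeight]
  | cons a t ih =>
    cases t with
    | nil => simp [expandL, pathWeight]
    | cons b s =>
      obtain ⟨Et, hE⟩ : ∃ Et, expandL u v k (b :: s) = Sum.inl b :: Et := by
        have h0 := expandL_head? (u := u) (v := v) (k := k) (b :: s)
        cases hE0 : expandL u v k (b :: s) with
        | nil => rw [hE0] at h0; simp at h0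
        | cons x Et =>
          rw [hE0] at h0
          simp at h0
          exact ⟨Et, by rw [h0]⟩
      show pathWeight (segC c w) (Sum.inl a ::
        ((if a = u ∧ b = v then (List.finRange k).map Sum.inr else []) ++
          expandL u v k (b :: s))) = _
      rw [pathWeight_cons_cons]
      by_cases h : a = u ∧ b = v
      · rw [if_pos h, hE]
        have hhd : ((List.finRange k).map (Sum.inr : Fin k → V ⊕ Fin k)
            ++ Sum.inl b :: Et).head? = some (Sum.inr (⟨0, hk⟩ : Fin k)) := by
          rw [List.head?_append_of_ne_nil, chain_head? hk]
          simp [List.ne_nil_of_length_pos, hk]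
        rw [pathWeight_cons_of_head? _ _ _ _ hhd, pathWeight_chainseg]
        have hEw : pathWeight (segC c w) (Sum.inl b :: Et) = pathWeight c (b :: s) := by
          rw [← hE]; exact ih
        rw [hEw]
        have : segC c w (Sum.inl a) (Sum.inr (⟨0, hk⟩ : Fin k)) = w 0 := rfl
        rw [this, ← mul_assoc]
        congr 1
        rw [h.1, h.2, ← hprod, Fin.prod_univ_succ, Fin.prod_univ_def]
      · rw [if_neg h, List.nil_append, hE, pathWeight_cons_of_head? _ (Sum.inl a) (Sum.inl b) (Sum.inl b :: Et) rfl]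
        have hEw : pathWeight (segC c w) (Sum.inl b :: Et) = pathWeight c (b :: s) := by
          rw [← hE]; exact ih
        rw [hEw]
        rfl

lemma contract_expandL :
    ∀ l : List V, (expandL u v k l).filterMap (Sum.elim some fun _ => none) = l := by
  intro l
  induction l with
  | nil => rfl
  | cons a t ih =>
    cases t with
    | nil => rfl
    | cons b s =>
      show List.filterMap _ (Sum.inl a ::
        ((if a = u ∧ b = v then (List.finRange k).map Sum.inr else []) ++
          expandL u v k (b :: s))) = _
      by_cases h : a = u ∧ b = v
      · rw [if_pos h]
        simp only [List.filterMap_cons, List.filterMap_append, List.filterMap_map, ih]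
        simp [Function.comp_def, ih]
      · rw [if_neg h]
        simp only [List.nil_append, List.filterMap_cons, ih]
        rfl

end SegAux

/-- Segmenting a cross-level edge preserves path sums: replacing the edge `u → v` of
weight `c u v` by a chain through `k ≥ 1` new vertices, where one edge of the chain has
weight `c u v` and all the others have weight `1`, leaves the path sum between any two
original vertices unchanged. -/
theorem stmt11 {V R : Type*} [Fintype V] [CommRing R] (E : V → V → Prop)
    (hacyc : ∀ a : V, ¬ Relation.TransGen E a a) (c : V → V → R)
    (u v : V) (huv : E u v) (k : ℕ) (hk : 0 < k)
    (w : Fin (k + 1) → R)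
    (hw : ∃ j₀, w j₀ = c u v ∧ ∀ j, j ≠ j₀ → w j = 1) :
    ∀ a b : V,
      pathSum (segE E u v k) (segC c w) (Sum.inl a) (Sum.inl b) = pathSum E c a b := by
  intro a b
  obtain ⟨j₀, hj₀, hj⟩ := hw
  have hprod : ∏ j, w j = c u v := by
    rw [Finset.prod_eq_single j₀ (fun j _ hne => hj j hne)
      (fun h => absurd (Finset.mem_univ _) h), hj₀]
  symm
  apply finsum_mem_eq_of_bijOn (SegAux.expandL u v k)
  · refine ⟨?_, ?_, ?_⟩
    · intro l hl
      obtain ⟨hne, hch, hhd, hlst⟩ := hl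
      refine ⟨?_, SegAux.chain'_expandL hk l hch, ?_, ?_⟩
      · cases l with
        | nil => exact absurd rfl hne
        | cons x t => exact SegAux.expandL_ne_nil x t
      · rw [SegAux.expandL_head?, hhd]; rfl
      · rw [SegAux.expandL_getLast?, hlst]; rfl
    · intro l1 _ l2 _ heq
      have h2 := congrArg (List.filterMap (Sum.elim some fun _ => none)) heq
      rwa [SegAux.contract_expandL, SegAux.contract_expandL] at h2
    · intro l' hl'
      obtain ⟨hne, hch, hhd, hlst⟩ := hl'
      obtain ⟨l, hP, hexp⟩ :=
        SegAux.segPath_surj hk huv l'.length l' a b le_rfl hch hhd hlst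
      exact ⟨l, hP, hexp⟩
  · intro l _
    exact (SegAux.pathWeight_expandL hk c w hprod l).symm
end

section
/- Let G be a finite DAG with weights in a commutative ring and let b⟨u,v⟩ be a 'block': every intermediate vertex on any path from u to v has all its in-neighbors and out-neighbors among the vertices of paths from u to v. If G' is obtained by deleting all vertices and edges strictly inside the block and adding a single edge u→v with weight equal to Σ_{paths p: u→v in the block} Π_{e∈p} c(e), then for any source y and sink x of G whose connecting paths do not use interior block vertices except via the block, pathSum_{G'}(y,x) = pathSum_G(y,x). -/
open scoped Classical

namespace Aux
variable {V : Type*} {R : Type*} [CommRing R]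

lemma pw_nil (c : V → V → R) : pathWeight c ([] : List V) = 1 := by simp [pathWeight]

lemma pw_single (c : V → V → R) (a : V) : pathWeight c [a] = 1 := by simp [pathWeight]

lemma pw_cons_cons (c : V → V → R) (a b : V) (t : List V) :
    pathWeight c (a :: b :: t) = c a b * pathWeight c (b :: t) := by
  simp [pathWeight]

lemma pw_append_cons (c : V → V → R) (l1 : List V) (a : V) (l2 : List V) :
    pathWeight c (l1 ++ a :: l2) = pathWeight c (l1 ++ [a]) * pathWeight c (a :: l2) := by
  induction l1 with
  | nil => simp [pw_single]
  | cons b l1 ih =>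
    cases l1 with
    | nil => simp [pw_cons_cons, pw_single, mul_assoc]
    | cons d l1' =>
      simp only [List.cons_append, pw_cons_cons] at *
      rw [ih, mul_assoc]

lemma pw_congr {c c' : V → V → R} {l : List V}
    (h : ∀ p ∈ l.zip l.tail, c p.1 p.2 = c' p.1 p.2) : pathWeight c l = pathWeight c' l := by
  unfold pathWeight
  exact congrArg List.prod (List.map_congr_left h)

lemma zip_tail_decomp {l : List V} {a b : V} (h : (a, b) ∈ l.zip l.tail) :
    ∃ l1 l2, l = l1 ++ a :: b :: l2 := by
  induction l with
  | nil => simp at h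
  | cons x t ih =>
    cases t with
    | nil => simp at h
    | cons y t' =>
      simp only [List.tail_cons, List.zip_cons_cons, List.mem_cons] at h
      rcases h with h | h
      · obtain ⟨h1, h2⟩ := Prod.mk.injEq .. ▸ h
        exact ⟨[], t', by simp_all⟩
      · obtain ⟨l1, l2, hl⟩ := ih (by simpa using h)
        exact ⟨x :: l1, l2, by simp [hl]⟩

lemma chain'_transGen_head {E : V → V → Prop} {a b : V} {t : List V}
    (h : List.Chain' E (a :: t)) (hb : b ∈ t) : Relation.TransGen E a b := by
  induction t generalizing a with
  | nil => simp at hb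
  | cons d t' ih =>
    have had : E a d := (List.isChain_cons.mp h).1 d rfl
    rcases List.mem_cons.mp hb with rfl | hb'
    · exact Relation.TransGen.single had
    · exact (Relation.TransGen.single had).trans (ih (h.tail) hb')

lemma nodup_of_chain' {E : V → V → Prop} (hacyc : ∀ a : V, ¬ Relation.TransGen E a a)
    {l : List V} (h : List.Chain' E l) : l.Nodup := by
  induction l with
  | nil => simp
  | cons a t ih =>
    refine List.nodup_cons.mpr ⟨fun ha => ?_, ih h.tail⟩
    exact hacyc a (chain'_transGen_head h ha)

lemma chain'_imp_adj {E F : V → V → Prop} {l : List V} (h : List.Chain' E l)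
    (himp : ∀ l1 a b l2, l = l1 ++ a :: b :: l2 → E a b → F a b) : List.Chain' F l := by
  induction l with
  | nil => exact List.isChain_nil
  | cons a t ih =>
    cases t with
    | nil => exact List.isChain_singleton _
    | cons b t' =>
      refine List.isChain_cons_cons.mpr ⟨himp [] a b t' rfl (List.isChain_cons_cons.mp h).1, ?_⟩
      exact ih (List.isChain_cons_cons.mp h).2 (fun l1 p q l2 he hE => himp (a :: l1) p q l2 (by simp [he]) hE)

lemma finite_paths [Fintype V] {E : V → V → Prop} (hacyc : ∀ a : V, ¬ Relation.TransGen E a a)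
    (a b : V) : {l : List V | IsPath E a b l}.Finite := by
  apply (List.finite_length_le V (Fintype.card V)).subset
  intro l hl
  exact (nodup_of_chain' hacyc hl.2.1).length_le_card

lemma eq_of_append_cons_nodup {a : V} {l1 r1 l2 r2 : List V}
    (h : l1 ++ a :: r1 = l2 ++ a :: r2) (hn : (l1 ++ a :: r1).Nodup) : l1 = l2 ∧ r1 = r2 := by
  induction l1 generalizing l2 with
  | nil =>
    cases l2 with
    | nil => simpa using h
    | cons b l2' =>
      exfalso
      have h2 : r1 = l2' ++ a :: r2 := by
        have := congrArg List.tail h; simpa using this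
      have ha : a ∉ r1 := (List.nodup_cons.mp (by simpa using hn)).1
      exact ha (h2 ▸ (by simp : a ∈ l2' ++ a :: r2))
  | cons b l1' ih =>
    cases l2 with
    | nil =>
      exfalso
      have hb : b = a := by have := congrArg List.head? h; simpa using this
      have hb2 : b ∉ l1' ++ a :: r1 := (List.nodup_cons.mp (by simpa using hn)).1
      exact hb2 (hb ▸ (by simp : a ∈ l1' ++ a :: r1))
    | cons d l2' =>
      simp only [List.cons_append, List.cons.injEq] at h ⊢
      obtain ⟨rfl, h2⟩ := h
      obtain ⟨h3, h4⟩ := ih h2 (by rw [List.cons_append] at hn; exact hn.of_cons)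
      exact ⟨⟨rfl, h3⟩, h4⟩

end Aux
section
variable {V : Type*}

lemma next_of_chain {E : V → V → Prop} {l : List V} {a w : V} (hc : List.Chain' E l)
    (hlast : l.getLast? = some w) (ha : a ∈ l) (hav : a ≠ w) : ∃ b, E a b := by
  induction l generalizing a with
  | nil => simp at ha
  | cons d t ih =>
    cases t with
    | nil =>
      simp only [List.mem_singleton] at ha
      subst ha
      simp only [List.getLast?_singleton, Option.some.injEq] at hlast
      exact absurd hlast hav
    | cons e t' =>
      rcases List.mem_cons.mp ha with rfl | ha'
      · exact ⟨e, (List.isChain_cons_cons.mp hc).1⟩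
      · exact ih hc.tail (by simpa using hlast) ha' hav

lemma prev_of_chain {E : V → V → Prop} {l : List V} {a w : V} (hc : List.Chain' E l)
    (hhead : l.head? = some w) (ha : a ∈ l) (haw : a ≠ w) : ∃ b, E b a := by
  induction l generalizing w with
  | nil => simp at ha
  | cons d t ih =>
    simp only [List.head?_cons, Option.some.injEq] at hhead
    subst hhead
    rcases List.mem_cons.mp ha with rfl | ha'
    · exact absurd rfl haw
    · cases t with
      | nil => simp at ha'
      | cons e t' =>
        by_cases hae : a = e
        · subst hae; exact ⟨d, (List.isChain_cons_cons.mp hc).1⟩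
        · exact ih hc.tail rfl (by simpa using ha') hae

lemma chain'_transGen_head {E : V → V → Prop} {a b : V} {t : List V}
    (h : List.Chain' E (a :: t)) (hb : b ∈ t) : Relation.TransGen E a b := by
  induction t generalizing a with
  | nil => simp at hb
  | cons d t' ih =>
    have had : E a d := (List.isChain_cons_cons.mp h).1
    rcases List.mem_cons.mp hb with rfl | hb'
    · exact Relation.TransGen.single had
    · exact (Relation.TransGen.single had).trans (ih (List.isChain_cons_cons.mp h).2 hb')

lemma mem_of_getLast?' {l : List V} {a : V} (h : l.getLast? = some a) : a ∈ l := by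
  obtain ⟨h1, h2⟩ := List.mem_getLast?_eq_getLast (show a ∈ l.getLast? from h)
  exact h2 ▸ List.getLast_mem h1

lemma chain'_transGen_last {E : V → V → Prop} {a w : V} {t : List V}
    (hc : List.Chain' E (a :: t)) (hlast : (a :: t).getLast? = some w) (haw : a ≠ w) :
    Relation.TransGen E a w := by
  have hw : w ∈ a :: t := mem_of_getLast?' hlast
  rcases List.mem_cons.mp hw with rfl | hw'
  · exact absurd rfl haw
  · exact chain'_transGen_head hc hw'

lemma head_glue {u : V} {m : List V} (l1 l2 : List V) (hh : m.head? = some u) :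
    (l1 ++ m ++ l2).head? = (l1 ++ [u]).head? := by
  cases l1 with
  | nil =>
    cases m with
    | nil => simp at hh
    | cons a t => simp at hh; simp [hh]
  | cons a t => simp

lemma last_glue {v : V} {m : List V} (l1 l2 : List V) (hl : m.getLast? = some v) :
    (l1 ++ m ++ l2).getLast? = (v :: l2).getLast? := by
  rw [List.append_assoc, List.getLast?_append, List.getLast?_append, hl]
  cases l2 with
  | nil => simp
  | cons b t =>
    obtain ⟨z, hz⟩ : ∃ z, (b :: t).getLast? = some z :=
      ⟨_, List.getLast?_eq_getLast_of_ne_nil (by simp)⟩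
    rw [hz]
    simp [List.getLast?_cons_cons, hz, Option.or]

lemma isPath_glue_iff (F : V → V → Prop) {y x u v : V} {l1 m l2 : List V}
    (hh : m.head? = some u) (hl : m.getLast? = some v) :
    IsPath F y x (l1 ++ m ++ l2) ↔
      (IsPath F u v m ∧ List.Chain' F l1 ∧ List.Chain' F l2 ∧
        (∀ a ∈ l1.getLast?, F a u) ∧ (∀ b ∈ l2.head?, F v b) ∧
        (l1 ++ [u]).head? = some y ∧ (v :: l2).getLast? = some x) := by
  have hm : m ≠ [] := by rintro rfl; simp at hh
  constructor
  · rintro ⟨hne, hc, hhd, hlt⟩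
    rw [List.append_assoc] at hc
    obtain ⟨hc1, hc23, hj1⟩ := List.isChain_append.mp hc
    obtain ⟨hc2, hc3, hj2⟩ := List.isChain_append.mp hc23
    refine ⟨⟨hm, hc2, hh, hl⟩, hc1, hc3, ?_, ?_, ?_, ?_⟩
    · intro a ha
      apply hj1 a ha
      rw [List.head?_append, hh]; simp [Option.or]
    · intro b hb; exact hj2 v hl b hb
    · rw [← head_glue l1 l2 hh]; exact hhd
    · rw [← last_glue l1 l2 hl]; exact hlt
  · rintro ⟨⟨_, hc2, _, _⟩, hc1, hc3, hj1, hj2, hhd, hlt⟩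
    refine ⟨by simp [hm], ?_, ?_, ?_⟩
    · rw [List.append_assoc]; refine List.isChain_append.mpr ?_
      refine ⟨hc1, List.isChain_append.mpr ⟨hc2, hc3, ?_⟩, ?_⟩
      · intro a ha b hb
        rw [hl] at ha; simp at ha; subst ha
        exact hj2 b hb
      · intro a ha b hb
        rw [List.head?_append, hh] at hb
        have : b = u := by simp [Option.or] at hb; exact hb.symm
        subst this; exact hj1 a ha
    · rw [head_glue l1 l2 hh]; exact hhd
    · rw [last_glue l1 l2 hl]; exact hlt

end
section
variable {V : Type*} {E : V → V → Prop} {u v : V} {B : Set V}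

lemma last_of_cons_suffix {a x : V} {s t : List V}
    (hl : (s ++ a :: t).getLast? = some x) : (a :: t).getLast? = some x := by
  rw [List.getLast?_append] at hl
  obtain ⟨z, hz⟩ : ∃ z, (a :: t).getLast? = some z :=
    ⟨_, List.getLast?_eq_getLast_of_ne_nil (by simp)⟩
  rw [hz] at hl ⊢
  simpa [Option.or] using hl

lemma head_of_append_singleton {a y : V} {s t : List V}
    (hh : ((s ++ [a]) ++ t).head? = some y) : (s ++ [a]).head? = some y := by
  rw [List.head?_append] at hh
  obtain ⟨z, hz⟩ : ∃ z, (s ++ [a]).head? = some z :=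
    ⟨_, List.head?_eq_head (by simp)⟩
  rw [hz] at hh ⊢
  simpa [Option.or] using hh

lemma tg_u (hB : B = {a | ∃ l, IsPath E u v l ∧ a ∈ l}) {a : V} (ha : a ∈ B) (hau : a ≠ u) :
    Relation.TransGen E u a := by
  rw [hB] at ha
  obtain ⟨l, ⟨hne, hc, hh, hl⟩, hal⟩ := ha
  cases l with
  | nil => simp at hne
  | cons d t =>
    simp only [List.head?_cons, Option.some.injEq] at hh
    subst hh
    rcases List.mem_cons.mp hal with rfl | h
    · exact absurd rfl hau
    · exact chain'_transGen_head hc h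

lemma tg_v (hB : B = {a | ∃ l, IsPath E u v l ∧ a ∈ l}) {a : V} (ha : a ∈ B) (hav : a ≠ v) :
    Relation.TransGen E a v := by
  rw [hB] at ha
  obtain ⟨l, ⟨hne, hc, hh, hl⟩, hal⟩ := ha
  obtain ⟨s, t, rfl⟩ := List.append_of_mem hal
  exact chain'_transGen_last hc.right_of_append (last_of_cons_suffix hl) hav

lemma mem_next (hB : B = {a | ∃ l, IsPath E u v l ∧ a ∈ l}) {a : V} (ha : a ∈ B)
    (hav : a ≠ v) : ∃ b, E a b := by
  rw [hB] at ha
  obtain ⟨l, ⟨hne, hc, hh, hl⟩, hal⟩ := ha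
  exact next_of_chain hc hl hal hav

lemma mem_prev (hB : B = {a | ∃ l, IsPath E u v l ∧ a ∈ l}) {a : V} (ha : a ∈ B)
    (hau : a ≠ u) : ∃ b, E b a := by
  rw [hB] at ha
  obtain ⟨l, ⟨hne, hc, hh, hl⟩, hal⟩ := ha
  exact prev_of_chain hc hh hal hau

variable (hacyc : ∀ a : V, ¬ Relation.TransGen E a a)
  (hB : B = {a | ∃ l, IsPath E u v l ∧ a ∈ l})
  (hclosed : ∀ a ∈ B, a ≠ u → a ≠ v → ∀ b, (E a b → b ∈ B) ∧ (E b a → b ∈ B))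

include hacyc hB hclosed in
lemma lemF {x : V} (hx : ∀ b, ¬ E x b) :
    ∀ (t : List V) (a : V), List.Chain' E (a :: t) → (a :: t).getLast? = some x →
      a ∈ B → a ≠ u → a ≠ v → v ∈ t := by
  intro t
  induction t with
  | nil =>
    intro a hc hl ha hau hav
    exfalso
    obtain ⟨b, hb⟩ := mem_next hB ha hav
    simp only [List.getLast?_singleton, Option.some.injEq] at hl
    subst hl
    exact hx b hb
  | cons d t' ih =>
    intro a hc hl ha hau hav
    have had : E a d := (List.isChain_cons_cons.mp hc).1
    have hd : d ∈ B := (hclosed a ha hau hav d).1 had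
    by_cases hdv : d = v
    · subst hdv; simp
    by_cases hdu : d = u
    · exfalso
      rw [hdu] at had
      exact hacyc u ((tg_u hB ha hau).trans (Relation.TransGen.single had))
    · exact List.mem_cons_of_mem _ (ih d hc.tail (by simpa using hl) hd hdu hdv)

include hacyc hB hclosed in
lemma lemB {y : V} (hy : ∀ b, ¬ E b y) :
    ∀ (s : List V) (a : V), List.Chain' E (s ++ [a]) → (s ++ [a]).head? = some y →
      a ∈ B → a ≠ u → a ≠ v → u ∈ s := by
  have H : ∀ (t : List V) (a : V), List.Chain' (flip E) (a :: t) → (a :: t).getLast? = some y →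
      a ∈ B → a ≠ u → a ≠ v → u ∈ t := by
    intro t
    induction t with
    | nil =>
      intro a hc hl ha hau hav
      exfalso
      obtain ⟨b, hb⟩ := mem_prev hB ha hau
      simp only [List.getLast?_singleton, Option.some.injEq] at hl
      subst hl
      exact hy b hb
    | cons d t' ih =>
      intro a hc hl ha hau hav
      have hda : E d a := (List.isChain_cons_cons.mp hc).1
      have hd : d ∈ B := (hclosed a ha hau hav d).2 hda
      by_cases hdu : d = u
      · subst hdu; simp
      by_cases hdv : d = v
      · exfalso
        rw [hdv] at hda
        exact hacyc v ((Relation.TransGen.single hda).trans (tg_v hB ha hav))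
      · exact List.mem_cons_of_mem _ (ih d hc.tail (by simpa using hl) hd hdu hdv)
  intro s a hc hh ha hau hav
  have hc' : List.Chain' (flip E) (a :: s.reverse) := by
    have := (List.isChain_reverse (R := flip E) (l := s ++ [a])).mpr hc
    simp only [List.reverse_append, List.reverse_singleton, List.singleton_append] at this
    exact this
  have hl' : (a :: s.reverse).getLast? = some y := by
    have : (s ++ [a]).reverse.getLast? = (s ++ [a]).head? := List.getLast?_reverse
    rw [hh] at this
    simpa using this
  have := H s.reverse a hc' hl' ha hau hav
  simpa using this

include hacyc hB hclosed in
lemma claim1 {y x : V} (hy : ∀ b, ¬ E b y) (hx : ∀ b, ¬ E x b) {p : List V} {w : V}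
    (hp : IsPath E y x p) (hw : w ∈ p) (hwB : w ∈ B) (hwu : w ≠ u) (hwv : w ≠ v) :
    ∃ l1 m' l2, p = l1 ++ u :: m' ++ v :: l2 := by
  obtain ⟨hne, hc, hh, hl⟩ := hp
  obtain ⟨s, t, rfl⟩ := List.append_of_mem hw
  have hvt : v ∈ t :=
    lemF hacyc hB hclosed hx t w hc.right_of_append (last_of_cons_suffix hl) hwB hwu hwv
  have hassoc : s ++ w :: t = (s ++ [w]) ++ t := by simp
  have hc1 : List.Chain' E (s ++ [w]) := by
    rw [hassoc] at hc; exact hc.left_of_append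
  have hh1 : (s ++ [w]).head? = some y := by
    rw [hassoc] at hh; exact head_of_append_singleton hh
  have hus : u ∈ s := lemB hacyc hB hclosed hy s w hc1 hh1 hwB hwu hwv
  obtain ⟨s1, s2, rfl⟩ := List.append_of_mem hus
  obtain ⟨t1, t2, rfl⟩ := List.append_of_mem hvt
  exact ⟨s1, s2 ++ w :: t1, t2, by simp⟩

lemma path_shape {m : List V} (huv : u ≠ v) (h : IsPath E u v m) :
    ∃ m'', m = u :: (m'' ++ [v]) := by
  obtain ⟨hne, hc, hh, hl⟩ := h
  cases m with
  | nil => simp at hne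
  | cons a t =>
    simp only [List.head?_cons, Option.some.injEq] at hh
    subst hh
    cases t with
    | nil =>
      simp only [List.getLast?_singleton, Option.some.injEq] at hl
      exact absurd hl huv
    | cons d t' =>
      have hne' : (d :: t') ≠ [] := by simp
      have hlast : (d :: t').getLast hne' = v := by
        have := List.getLast?_eq_getLast_of_ne_nil hne'
        rw [List.getLast?_cons_cons, this] at hl
        simpa using hl
      exact ⟨(d :: t').dropLast, by rw [← hlast, List.dropLast_append_getLast hne']⟩

end

section
variable {V : Type*} [DecidableEq V]

def split3 (u : V) (q : List V) : List V × List V :=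
  (q.takeWhile (· ≠ u), (q.dropWhile (· ≠ u)).drop 1)

lemma split3_eq (u : V) {l1 : List V} (r : List V) :
    u ∉ l1 → split3 u (l1 ++ u :: r) = (l1, r) := by
  induction l1 with
  | nil => intro _; simp [split3]
  | cons a t ih =>
    intro h
    have ha : (a ≠ u) := fun e => h (by simp [e])
    have h' : u ∉ t := fun e => h (List.mem_cons_of_mem _ e)
    have h2 := ih h'
    simp only [split3, Prod.mk.injEq, ne_eq, decide_not, List.drop_one] at h2 ⊢
    simp [List.takeWhile_cons, List.dropWhile_cons, ha, h2.1, h2.2]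

end

section
variable {V : Type*} {R : Type*} [CommRing R]

lemma adj_of_chain {F : V → V → Prop} {l1 l2 : List V} {a b : V}
    (h : List.Chain' F (l1 ++ a :: b :: l2)) : F a b :=
  (List.isChain_cons_cons.mp h.right_of_append).1

lemma pair_isPath {F : V → V → Prop} {a b : V} (h : F a b) : IsPath F a b [a, b] :=
  ⟨by simp, List.isChain_pair.mpr h, rfl, by simp⟩

lemma mem_zip_tail : ∀ (l1 l2 : List V) (a b : V),
    (a, b) ∈ ((l1 ++ a :: b :: l2).zip (l1 ++ a :: b :: l2).tail) := by
  intro l1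
  induction l1 with
  | nil => intro l2 a b; simp [List.zip_cons_cons]
  | cons d t ih =>
    intro l2 a b
    cases h : t ++ a :: b :: l2 with
    | nil => exact absurd h (by simp)
    | cons e r =>
      have hmem := ih l2 a b
      rw [h] at hmem
      rw [List.cons_append, h, List.tail_cons, List.zip_cons_cons]
      exact List.mem_cons_of_mem _ hmem

lemma last_concat' (A : List V) (a : V) : (A ++ [a]).getLast? = some a :=
  List.getLast?_concat

end

section
variable {V : Type*} {E : V → V → Prop} {u v : V} {B : Set V}
variable (hacyc : ∀ a : V, ¬ Relation.TransGen E a a)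
  (hB : B = {a | ∃ l, IsPath E u v l ∧ a ∈ l})
  (hclosed : ∀ a ∈ B, a ≠ u → a ≠ v → ∀ b, (E a b → b ∈ B) ∧ (E b a → b ∈ B))

include hacyc hB hclosed in
lemma interior_excluded {y x : V} (hy : ∀ b, ¬ E b y) (hx : ∀ b, ¬ E x b)
    {s t : List V} {w : V} (hp : IsPath E y x (s ++ w :: t))
    (hwB : w ∈ B) (hwu : w ≠ u) (hwv : w ≠ v) : u ∈ s ∧ v ∈ t := by
  obtain ⟨hne, hc, hh, hl⟩ := hp
  have hvt : v ∈ t :=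
    lemF hacyc hB hclosed hx t w hc.right_of_append (last_of_cons_suffix hl) hwB hwu hwv
  have hassoc : s ++ w :: t = (s ++ [w]) ++ t := by simp
  have hc1 : List.Chain' E (s ++ [w]) := by rw [hassoc] at hc; exact hc.left_of_append
  have hh1 : (s ++ [w]).head? = some y := by rw [hassoc] at hh; exact head_of_append_singleton hh
  exact ⟨lemB hacyc hB hclosed hy s w hc1 hh1 hwB hwu hwv, hvt⟩

end


/-- Collapsing a block: let `B` be the set of vertices on paths from `u` to `v`, and
assume the block closure property (every intermediate vertex of the block has all its
in- and out-neighbours inside `B`).  Replacing the interior of the block by a single edge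
`u → v` whose weight is the path sum of the block (added to any pre-existing edge
`u → v`) preserves the path sum from every source `y` to every sink `x`. -/
theorem stmt14 {V R : Type*} [Fintype V] [CommRing R] (E : V → V → Prop)
    (hacyc : ∀ a : V, ¬ Relation.TransGen E a a) (c : V → V → R)
    (u v : V) (huv : u ≠ v)
    (B : Set V) (hB : B = {a | ∃ l, IsPath E u v l ∧ a ∈ l})
    (hclosed : ∀ a ∈ B, a ≠ u → a ≠ v →
      ∀ b, (E a b → b ∈ B) ∧ (E b a → b ∈ B)) :
    ∀ y x : V, (∀ a, ¬ E a y) → (∀ b, ¬ E x b) →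
      pathSum
        (fun a b => (E a b ∧ a ∉ B \ {u, v} ∧ b ∉ B \ {u, v} ∧ ¬(a = u ∧ b = v)) ∨
          (a = u ∧ b = v))
        (fun a b => if a = u ∧ b = v then pathSum E c u v else c a b) y x
      = pathSum E c y x := by
  intro y x hy hx
  have hIdef : ∀ w : V, w ∈ B \ ({u, v} : Set V) ↔ (w ∈ B ∧ w ≠ u ∧ w ≠ v) := by
    intro w
    simp only [Set.mem_diff, Set.mem_insert_iff, Set.mem_singleton_iff, not_or, ne_eq]
  set S := pathSum E c u v with hSdef
  set E' : V → V → Prop :=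
    fun a b => (E a b ∧ a ∉ B \ {u, v} ∧ b ∉ B \ {u, v} ∧ ¬(a = u ∧ b = v)) ∨ (a = u ∧ b = v)
    with hE'def
  set c' : V → V → R := fun a b => if a = u ∧ b = v then S else c a b with hc'def
  have hfinP : {l : List V | IsPath E y x l}.Finite := Aux.finite_paths hacyc y x
  have key : ∀ (F0 : V → V → Prop) (c0 : V → V → R) (a b : V)
      (hfin : {l : List V | IsPath F0 a b l}.Finite),
      pathSum F0 c0 a b = ∑ l ∈ hfin.toFinset, pathWeight c0 l := by
    intro F0 c0 a b hfin
    rw [pathSum]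
    exact finsum_mem_eq_sum_of_inter_support_eq _ (by rw [Set.Finite.coe_toFinset])
  have hndP : ∀ {p : List V}, IsPath E y x p → p.Nodup :=
    fun hp => Aux.nodup_of_chain' hacyc hp.2.1
  by_cases hM : ∃ m, IsPath E u v m
  case neg =>
    have hS0 : S = 0 := by
      have hset : {l : List V | IsPath E u v l} = ∅ := by
        ext l
        simp only [Set.mem_setOf_eq, Set.mem_empty_iff_false, iff_false]
        exact fun h => hM ⟨l, h⟩
      rw [hSdef, pathSum, hset, finsum_mem_empty]
    have hBe : ∀ w : V, w ∉ B \ ({u, v} : Set V) := by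
      intro w hw
      rw [hIdef] at hw
      obtain ⟨hwB, -, -⟩ := hw
      rw [hB] at hwB
      obtain ⟨l0, hl0, -⟩ := hwB
      exact hM ⟨l0, hl0⟩
    have hnsp : ∀ a b : V, E a b → ¬(a = u ∧ b = v) := by
      rintro a b hab ⟨rfl, rfl⟩
      exact hM ⟨[a, b], pair_isPath hab⟩
    have claimA : ∀ l, IsPath E y x l → (IsPath E' y x l ∧ pathWeight c' l = pathWeight c l) := by
      intro l hl
      obtain ⟨h1, h2, h3, h4⟩ := hl
      constructor
      · exact ⟨h1, Aux.chain'_imp_adj h2 (fun k1 a b k2 hdec hab =>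
          Or.inl ⟨hab, hBe a, hBe b, hnsp a b hab⟩), h3, h4⟩
      · apply Aux.pw_congr
        intro pz hpz
        obtain ⟨k1, k2, hdec⟩ := Aux.zip_tail_decomp hpz
        have hab : E pz.1 pz.2 := adj_of_chain (hdec ▸ h2)
        simp only [hc'def]
        exact if_neg (hnsp _ _ hab)
    have claimB : ∀ l, IsPath E' y x l → pathWeight c' l ≠ 0 → IsPath E y x l := by
      intro l hl hnz
      have hnadj : ∀ k1 k2, l ≠ k1 ++ u :: v :: k2 := by
        rintro k1 k2 rfl
        apply hnz
        have hmem : ((u, v) : V × V) ∈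
            ((k1 ++ u :: v :: k2).zip (k1 ++ u :: v :: k2).tail) := mem_zip_tail k1 k2 u v
        rw [pathWeight]
        refine List.prod_eq_zero (List.mem_map.mpr ⟨(u, v), hmem, ?_⟩)
        simp [hc'def, hS0]
      obtain ⟨h1, h2, h3, h4⟩ := hl
      refine ⟨h1, Aux.chain'_imp_adj h2 ?_, h3, h4⟩
      rintro k1 a b k2 hdec (⟨h, -⟩ | ⟨rfl, rfl⟩)
      · exact h
      · exact absurd hdec (hnadj k1 k2)
    have h2eq : {l : List V | IsPath E y x l} ∩ Function.support (pathWeight c) =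
        ↑hfinP.toFinset ∩ Function.support (pathWeight c) := by
      rw [Set.Finite.coe_toFinset]
    have h1eq : {l : List V | IsPath E' y x l} ∩ Function.support (pathWeight c') =
        ↑hfinP.toFinset ∩ Function.support (pathWeight c') := by
      ext l
      simp only [Set.mem_inter_iff, Function.mem_support, Set.Finite.coe_toFinset,
        Set.mem_setOf_eq]
      constructor
      · rintro ⟨hl, hnz⟩
        exact ⟨claimB l hl hnz, hnz⟩
      · rintro ⟨hl, hnz⟩
        exact ⟨(claimA l hl).1, hnz⟩
    rw [pathSum, pathSum, finsum_mem_eq_sum_of_inter_support_eq (pathWeight c') h1eq,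
      finsum_mem_eq_sum_of_inter_support_eq (pathWeight c) h2eq]
    apply Finset.sum_congr rfl
    intro l hl
    rw [Set.Finite.mem_toFinset] at hl
    exact (claimA l hl).2
  case pos =>
    have htguv : Relation.TransGen E u v := by
      obtain ⟨m, hm⟩ := hM
      obtain ⟨m'', hmsh⟩ := path_shape huv hm
      obtain ⟨hne, hc, hh, hl⟩ := hm
      rw [hmsh] at hc hl
      exact chain'_transGen_last hc hl huv
    have hacyc' : ∀ a : V, ¬ Relation.TransGen E' a a := by
      intro a ha
      apply hacyc a
      have hmono : ∀ p q : V, E' p q → Relation.TransGen E p q := by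
        rintro p q (⟨h, -⟩ | ⟨rfl, rfl⟩)
        · exact Relation.TransGen.single h
        · exact htguv
      have h2 := Relation.TransGen.mono hmono a a ha
      rwa [Relation.transGen_idem] at h2
    have hndP' : ∀ {p : List V}, IsPath E' y x p → p.Nodup :=
      fun hp => Aux.nodup_of_chain' hacyc' hp.2.1
    have hndM : ∀ {p : List V}, IsPath E u v p → p.Nodup :=
      fun hp => Aux.nodup_of_chain' hacyc hp.2.1
    have hfinP' : {l : List V | IsPath E' y x l}.Finite := Aux.finite_paths hacyc' y x
    have hfinM : {l : List V | IsPath E u v l}.Finite := Aux.finite_paths hacyc u v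
    have hSsum : S = ∑ m ∈ hfinM.toFinset, pathWeight c m := key E c u v hfinM
    have huI : u ∉ B \ ({u, v} : Set V) := by
      rw [hIdef]; rintro ⟨-, h, -⟩; exact h rfl
    have hvI : v ∉ B \ ({u, v} : Set V) := by
      rw [hIdef]; rintro ⟨-, -, h⟩; exact h rfl
    have hE'uv : E' u v := Or.inr ⟨rfl, rfl⟩
    have hpairhead : ([u, v] : List V).head? = some u := rfl
    have hpairlast : ([u, v] : List V).getLast? = some v := by simp
    have transferA : ∀ {k1 k2 m : List V}, IsPath E' y x (k1 ++ u :: v :: k2) →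
        IsPath E u v m → IsPath E y x (k1 ++ m ++ k2) := by
      intro k1 k2 m hq hm
      have hnd : (k1 ++ u :: v :: k2).Nodup := hndP' hq
      have hu1 : u ∉ k1 := fun h => (List.disjoint_of_nodup_append hnd) h (by simp)
      have hu2 : u ∉ k2 := by
        have h2 := List.Nodup.of_append_right hnd
        exact fun h => (List.nodup_cons.mp h2).1 (List.mem_cons_of_mem _ h)
      have hq2 : k1 ++ u :: v :: k2 = k1 ++ [u, v] ++ k2 := by simp
      rw [hq2] at hq
      obtain ⟨-, hch1, hch2, hj1, hj2, hhd, hlt⟩ :=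
        (isPath_glue_iff E' hpairhead hpairlast).mp hq
      have hch1E : List.Chain' E k1 := by
        refine Aux.chain'_imp_adj hch1 ?_
        rintro w1 a b w2 hdec (⟨h, -⟩ | ⟨rfl, rfl⟩)
        · exact h
        · exact absurd (show _ from by rw [hdec]; simp) hu1
      have hch2E : List.Chain' E k2 := by
        refine Aux.chain'_imp_adj hch2 ?_
        rintro w1 a b w2 hdec (⟨h, -⟩ | ⟨rfl, rfl⟩)
        · exact h
        · exact absurd (show _ from by rw [hdec]; simp) hu2
      have hj1E : ∀ a ∈ k1.getLast?, E a u := by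
        intro a ha
        rcases hj1 a ha with ⟨h, -⟩ | ⟨-, h⟩
        · exact h
        · exact absurd h huv
      have hj2E : ∀ b ∈ k2.head?, E v b := by
        intro b hb
        rcases hj2 b hb with ⟨h, -⟩ | ⟨h, -⟩
        · exact h
        · exact absurd h.symm huv
      exact (isPath_glue_iff E hm.2.2.1 hm.2.2.2).mpr ⟨hm, hch1E, hch2E, hj1E, hj2E, hhd, hlt⟩
    have transferB : ∀ {k1 m' k2 : List V}, IsPath E y x (k1 ++ u :: (m' ++ v :: k2)) →
        IsPath E' y x (k1 ++ u :: v :: k2) ∧ IsPath E u v (u :: (m' ++ [v])) := by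
      intro k1 m' k2 hp
      have hp0 := hp
      have hnd := hndP hp
      have hu1 : u ∉ k1 := fun h => (List.disjoint_of_nodup_append hnd) h (by simp)
      have hndrest : (m' ++ v :: k2).Nodup := (List.Nodup.of_append_right hnd).of_cons
      have hv2 : v ∉ k2 := (List.nodup_cons.mp (List.Nodup.of_append_right hndrest)).1
      have hmh : (u :: (m' ++ [v])).head? = some u := rfl
      have hml : (u :: (m' ++ [v])).getLast? = some v := by
        rw [show u :: (m' ++ [v]) = (u :: m') ++ [v] by simp]
        exact List.getLast?_concat
      have hp2 : k1 ++ u :: (m' ++ v :: k2) = k1 ++ (u :: (m' ++ [v])) ++ k2 := by simp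
      rw [hp2] at hp
      obtain ⟨hmP, hch1, hch2, hj1, hj2, hhd, hlt⟩ := (isPath_glue_iff E hmh hml).mp hp
      have hint1 : ∀ w ∈ k1, w ∉ B \ ({u, v} : Set V) := by
        intro w hw hwI
        rw [hIdef] at hwI
        obtain ⟨hwB, hwu, hwv⟩ := hwI
        obtain ⟨la, lb, hk⟩ := List.append_of_mem hw
        have hp3 : IsPath E y x (la ++ w :: (lb ++ u :: (m' ++ v :: k2))) := by
          rw [show la ++ w :: (lb ++ u :: (m' ++ v :: k2))
              = (la ++ w :: lb) ++ u :: (m' ++ v :: k2) by simp, ← hk]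
          exact hp0
        have hu := (interior_excluded hacyc hB hclosed hy hx hp3 hwB hwu hwv).1
        exact hu1 (by rw [hk]; exact List.mem_append.mpr (Or.inl hu))
      have hint2 : ∀ w ∈ k2, w ∉ B \ ({u, v} : Set V) := by
        intro w hw hwI
        rw [hIdef] at hwI
        obtain ⟨hwB, hwu, hwv⟩ := hwI
        obtain ⟨la, lb, hk⟩ := List.append_of_mem hw
        have hp3 : IsPath E y x ((k1 ++ u :: (m' ++ v :: la)) ++ w :: lb) := by
          rw [show (k1 ++ u :: (m' ++ v :: la)) ++ w :: lb
              = k1 ++ u :: (m' ++ v :: (la ++ w :: lb)) by simp, ← hk]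
          exact hp0
        have hv := (interior_excluded hacyc hB hclosed hy hx hp3 hwB hwu hwv).2
        exact hv2 (by rw [hk]; exact List.mem_append.mpr (Or.inr (List.mem_cons_of_mem _ hv)))
      have hu2 : u ∉ k2 := by
        have h2 : u ∉ m' ++ v :: k2 := (List.nodup_cons.mp (List.Nodup.of_append_right hnd)).1
        exact fun h => h2 (List.mem_append.mpr (Or.inr (List.mem_cons_of_mem _ h)))
      have hch1' : List.Chain' E' k1 := by
        refine Aux.chain'_imp_adj hch1 ?_
        intro w1 a b w2 hdec hab
        refine Or.inl ⟨hab, hint1 a (by rw [hdec]; simp), hint1 b (by rw [hdec]; simp), ?_⟩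
        rintro ⟨rfl, -⟩
        exact hu1 (by rw [hdec]; simp)
      have hch2' : List.Chain' E' k2 := by
        refine Aux.chain'_imp_adj hch2 ?_
        intro w1 a b w2 hdec hab
        refine Or.inl ⟨hab, hint2 a (by rw [hdec]; simp), hint2 b (by rw [hdec]; simp), ?_⟩
        rintro ⟨rfl, -⟩
        exact hu2 (by rw [hdec]; simp)
      have hj1' : ∀ a ∈ k1.getLast?, E' a u := by
        intro a ha
        exact Or.inl ⟨hj1 a ha, hint1 a (mem_of_getLast?' (Option.mem_def.mp ha)), huI,
          fun h => huv h.2⟩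
      have hj2' : ∀ b ∈ k2.head?, E' v b := by
        intro b hb
        have hbk : b ∈ k2 := by
          cases k2 with
          | nil => simp at hb
          | cons e t =>
            have he : e = b := by simpa using hb
            rw [← he]; simp
        exact Or.inl ⟨hj2 b hb, hvI, hint2 b hbk, fun h => huv h.1.symm⟩
      constructor
      · have hq : IsPath E' y x (k1 ++ [u, v] ++ k2) :=
          (isPath_glue_iff E' hpairhead hpairlast).mpr
            ⟨pair_isPath hE'uv, hch1', hch2', hj1', hj2', hhd, hlt⟩
        rw [show k1 ++ [u, v] ++ k2 = k1 ++ u :: v :: k2 by simp] at hq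
        exact hq
      · exact hmP
    have hcleanset : hfinP'.toFinset.filter (fun q => ¬ ∃ k1 k2, q = k1 ++ u :: v :: k2) =
        hfinP.toFinset.filter (fun p => ¬ ∃ k1 m' k2, p = k1 ++ u :: (m' ++ v :: k2)) := by
      ext q
      simp only [Finset.mem_filter, Set.Finite.mem_toFinset, Set.mem_setOf_eq]
      constructor
      · rintro ⟨hq, hns⟩
        have hqE : IsPath E y x q := by
          obtain ⟨h1, h2, h3, h4⟩ := hq
          refine ⟨h1, Aux.chain'_imp_adj h2 ?_, h3, h4⟩
          rintro k1 a b k2 hdec (⟨h, -⟩ | ⟨rfl, rfl⟩)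
          · exact h
          · exact absurd ⟨k1, k2, hdec⟩ hns
        refine ⟨hqE, ?_⟩
        rintro ⟨k1, m', k2, rfl⟩
        cases m' with
        | nil => exact hns ⟨k1, k2, by simp⟩
        | cons w m'' =>
          have hsh : k1 ++ u :: ((w :: m'') ++ v :: k2) = k1 ++ u :: w :: (m'' ++ v :: k2) := by
            simp
          have hadj : E' u w := by
            have hc := hq.2.1
            rw [hsh] at hc
            exact adj_of_chain hc
          have hmE : IsPath E u v (u :: ((w :: m'') ++ [v])) := (transferB hqE).2
          have hwB : w ∈ B := by rw [hB]; exact ⟨_, hmE, by simp⟩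
          have hnd := hndP hqE
          have hnd' : (k1 ++ u :: w :: (m'' ++ v :: k2)).Nodup := by rw [← hsh]; exact hnd
          have hnd2 := List.Nodup.of_append_right hnd'
          have hwu : w ≠ u := fun h => (List.nodup_cons.mp hnd2).1 (by rw [h]; simp)
          have hnd3 := (List.nodup_cons.mp hnd2).2
          have hwv : w ≠ v := fun h => (List.nodup_cons.mp hnd3).1 (by rw [h]; simp)
          rcases hadj with ⟨-, -, hwI, -⟩ | ⟨-, h⟩
          · exact hwI (by rw [hIdef]; exact ⟨hwB, hwu, hwv⟩)
          · exact hwv h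
      · rintro ⟨hp, hns⟩
        have hpfull : IsPath E y x q := hp
        refine ⟨?_, fun hsp => ?_⟩
        · obtain ⟨h1, h2, h3, h4⟩ := hp
          refine ⟨h1, Aux.chain'_imp_adj h2 ?_, h3, h4⟩
          intro k1 a b k2 hdec hab
          refine Or.inl ⟨hab, ?_, ?_, ?_⟩
          · intro haI
            rw [hIdef] at haI
            obtain ⟨haB, hau, hav⟩ := haI
            obtain ⟨l1, mm, l2, hdd⟩ :=
              claim1 hacyc hB hclosed hy hx hpfull (by rw [hdec]; simp) haB hau hav
            exact hns ⟨l1, mm, l2, by rw [hdd]; simp⟩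
          · intro hbI
            rw [hIdef] at hbI
            obtain ⟨hbB, hbu, hbv⟩ := hbI
            obtain ⟨l1, mm, l2, hdd⟩ :=
              claim1 hacyc hB hclosed hy hx hpfull (by rw [hdec]; simp) hbB hbu hbv
            exact hns ⟨l1, mm, l2, by rw [hdd]; simp⟩
          · rintro ⟨rfl, rfl⟩
            exact hns ⟨k1, [], k2, by rw [hdec]; simp⟩
        · obtain ⟨k1, k2, hd⟩ := hsp
          exact hns ⟨k1, [], k2, by rw [hd]; simp⟩
    have hcleansum :
        ∑ q ∈ hfinP'.toFinset.filter (fun q => ¬ ∃ k1 k2, q = k1 ++ u :: v :: k2),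
          pathWeight c' q
        = ∑ p ∈ hfinP.toFinset.filter (fun p => ¬ ∃ k1 m' k2, p = k1 ++ u :: (m' ++ v :: k2)),
          pathWeight c p := by
      rw [hcleanset]
      refine Finset.sum_congr rfl ?_
      intro p hp
      simp only [Finset.mem_filter, Set.Finite.mem_toFinset, Set.mem_setOf_eq] at hp
      obtain ⟨-, hns⟩ := hp
      apply Aux.pw_congr
      intro pz hpz
      obtain ⟨k1, k2, hdec⟩ := Aux.zip_tail_decomp hpz
      have hne : ¬(pz.1 = u ∧ pz.2 = v) := by
        rintro ⟨h1', h2'⟩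
        exact hns ⟨k1, [], k2, by rw [hdec, h1', h2']; simp⟩
      simp only [hc'def]
      exact if_neg hne
    have heval : ∀ q ∈ hfinP'.toFinset.filter (fun q => ∃ k1 k2, q = k1 ++ u :: v :: k2),
        pathWeight c' q =
          pathWeight c ((split3 u q).1 ++ [u]) * S * pathWeight c ((split3 u q).2) := by
      intro q hq
      simp only [Finset.mem_filter, Set.Finite.mem_toFinset, Set.mem_setOf_eq] at hq
      obtain ⟨hqP, hex⟩ := hq
      obtain ⟨k1, k2, rfl⟩ := hex
      have hnd := hndP' hqP
      have hu1 : u ∉ k1 := fun h => (List.disjoint_of_nodup_append hnd) h (by simp)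
      have hv1 : v ∉ k1 := fun h => (List.disjoint_of_nodup_append hnd) h (by simp)
      have h2' := List.Nodup.of_append_right hnd
      have hu2 : u ∉ k2 := fun h => (List.nodup_cons.mp h2').1 (List.mem_cons_of_mem _ h)
      have hs3 : split3 u (k1 ++ u :: v :: k2) = (k1, v :: k2) := split3_eq u _ hu1
      rw [hs3]
      have hstep : pathWeight c' (k1 ++ u :: v :: k2)
          = pathWeight c' (k1 ++ [u]) * (c' u v * pathWeight c' (v :: k2)) := by
        rw [Aux.pw_append_cons c' k1 u (v :: k2), Aux.pw_cons_cons]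
      have hcuv : c' u v = S := by simp [hc'def]
      have hw1 : pathWeight c' (k1 ++ [u]) = pathWeight c (k1 ++ [u]) := by
        apply Aux.pw_congr
        intro pz hpz
        have hzm := List.of_mem_zip hpz
        have hne2 : ¬(pz.1 = u ∧ pz.2 = v) := by
          rintro ⟨-, h2''⟩
          have hmem2 : pz.2 ∈ k1 ++ [u] := List.mem_of_mem_tail hzm.2
          rw [h2''] at hmem2
          rcases List.mem_append.mp hmem2 with h | h
          · exact hv1 h
          · have hvu : v = u := by simpa using h
            exact huv hvu.symm
        simp only [hc'def]
        exact if_neg hne2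
      have hw2 : pathWeight c' (v :: k2) = pathWeight c (v :: k2) := by
        apply Aux.pw_congr
        intro pz hpz
        have hzm := List.of_mem_zip hpz
        have hne2 : ¬(pz.1 = u ∧ pz.2 = v) := by
          rintro ⟨h1'', -⟩
          have hmem2 : pz.1 ∈ v :: k2 := hzm.1
          rw [h1''] at hmem2
          rcases List.mem_cons.mp hmem2 with h | h
          · exact huv h
          · exact hu2 h
        simp only [hc'def]
        exact if_neg hne2
      rw [hstep, hcuv, hw1, hw2]
      ring
    have hbij : ∑ z ∈ (hfinP'.toFinset.filter (fun q => ∃ k1 k2, q = k1 ++ u :: v :: k2)) ×ˢ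
          hfinM.toFinset,
          pathWeight c ((split3 u z.1).1 ++ [u]) * pathWeight c z.2 *
            pathWeight c ((split3 u z.1).2)
        = ∑ p ∈ hfinP.toFinset.filter (fun p => ∃ k1 m' k2, p = k1 ++ u :: (m' ++ v :: k2)),
          pathWeight c p := by
      refine Finset.sum_nbij'
        (i := fun z => (split3 u z.1).1 ++ z.2 ++ ((split3 u z.1).2).tail)
        (j := fun p => ((split3 u p).1 ++ u :: v :: (split3 v (split3 u p).2).2,
          u :: ((split3 v (split3 u p).2).1 ++ [v]))) ?_ ?_ ?_ ?_ ?_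
      · rintro ⟨q, m⟩ hz
        rw [Finset.mem_product, Finset.mem_filter] at hz
        obtain ⟨⟨hqF, k1, k2, hqeq⟩, hmF⟩ := hz
        rw [hfinP'.mem_toFinset] at hqF
        rw [hfinM.mem_toFinset] at hmF
        simp only [Set.mem_setOf_eq] at hqF hmF
        subst hqeq
        obtain ⟨m'', hmsh⟩ := path_shape huv hmF
        subst hmsh
        have hndq := hndP' hqF
        have hu1 : u ∉ k1 := fun h => (List.disjoint_of_nodup_append hndq) h (by simp)
        have hs3 : split3 u (k1 ++ u :: v :: k2) = (k1, v :: k2) := split3_eq u _ hu1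
        dsimp only
        rw [hs3]
        dsimp only
        rw [List.tail_cons]
        refine Finset.mem_filter.mpr ⟨hfinP.mem_toFinset.mpr (transferA hqF hmF),
          ⟨k1, m'', k2, by simp⟩⟩
      · intro p hp
        rw [Finset.mem_filter] at hp
        obtain ⟨hpF, k1, m', k2, hpeq⟩ := hp
        rw [hfinP.mem_toFinset] at hpF
        simp only [Set.mem_setOf_eq] at hpF
        subst hpeq
        have hnd := hndP hpF
        have hu1 : u ∉ k1 := fun h => (List.disjoint_of_nodup_append hnd) h (by simp)
        have hndrest : (m' ++ v :: k2).Nodup := (List.Nodup.of_append_right hnd).of_cons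
        have hvm : v ∉ m' := fun h => (List.disjoint_of_nodup_append hndrest) h (by simp)
        have hs3 : split3 u (k1 ++ u :: (m' ++ v :: k2)) = (k1, m' ++ v :: k2) :=
          split3_eq u _ hu1
        have hs3v : split3 v (m' ++ v :: k2) = (m', k2) := split3_eq v _ hvm
        obtain ⟨hqE', hmE⟩ := transferB hpF
        rw [hs3]
        dsimp only
        rw [hs3v]
        dsimp only
        exact Finset.mem_product.mpr
          ⟨Finset.mem_filter.mpr ⟨hfinP'.mem_toFinset.mpr hqE', ⟨k1, k2, rfl⟩⟩,
            hfinM.mem_toFinset.mpr hmE⟩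
      · rintro ⟨q, m⟩ hz
        rw [Finset.mem_product, Finset.mem_filter] at hz
        obtain ⟨⟨hqF, k1, k2, hqeq⟩, hmF⟩ := hz
        rw [hfinP'.mem_toFinset] at hqF
        rw [hfinM.mem_toFinset] at hmF
        simp only [Set.mem_setOf_eq] at hqF hmF
        subst hqeq
        obtain ⟨m'', hmsh⟩ := path_shape huv hmF
        subst hmsh
        have hndq := hndP' hqF
        have hu1 : u ∉ k1 := fun h => (List.disjoint_of_nodup_append hndq) h (by simp)
        have hndm := hndM hmF
        have hvm : v ∉ m'' := by
          have h2 := (List.nodup_cons.mp hndm).2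
          exact fun h => (List.disjoint_of_nodup_append h2) h (by simp)
        have hs3 : split3 u (k1 ++ u :: v :: k2) = (k1, v :: k2) := split3_eq u _ hu1
        dsimp only
        rw [hs3]
        dsimp only
        rw [List.tail_cons]
        rw [show k1 ++ (u :: (m'' ++ [v])) ++ k2 = k1 ++ u :: (m'' ++ v :: k2) by simp]
        have hs3' : split3 u (k1 ++ u :: (m'' ++ v :: k2)) = (k1, m'' ++ v :: k2) :=
          split3_eq u _ hu1
        rw [hs3']
        dsimp only
        rw [split3_eq v _ hvm]
      · intro p hp
        rw [Finset.mem_filter] at hp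
        obtain ⟨hpF, k1, m', k2, hpeq⟩ := hp
        rw [hfinP.mem_toFinset] at hpF
        simp only [Set.mem_setOf_eq] at hpF
        subst hpeq
        have hnd := hndP hpF
        have hu1 : u ∉ k1 := fun h => (List.disjoint_of_nodup_append hnd) h (by simp)
        have hndrest : (m' ++ v :: k2).Nodup := (List.Nodup.of_append_right hnd).of_cons
        have hvm : v ∉ m' := fun h => (List.disjoint_of_nodup_append hndrest) h (by simp)
        have hs3 : split3 u (k1 ++ u :: (m' ++ v :: k2)) = (k1, m' ++ v :: k2) :=
          split3_eq u _ hu1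
        have hs3v : split3 v (m' ++ v :: k2) = (m', k2) := split3_eq v _ hvm
        dsimp only
        rw [hs3]
        dsimp only
        rw [hs3v]
        dsimp only
        have hs3'' : split3 u (k1 ++ u :: v :: k2) = (k1, v :: k2) := split3_eq u _ hu1
        rw [hs3'']
        dsimp only
        rw [List.tail_cons]
        simp
      · rintro ⟨q, m⟩ hz
        rw [Finset.mem_product, Finset.mem_filter] at hz
        obtain ⟨⟨hqF, k1, k2, hqeq⟩, hmF⟩ := hz
        rw [hfinP'.mem_toFinset] at hqF
        rw [hfinM.mem_toFinset] at hmF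
        simp only [Set.mem_setOf_eq] at hqF hmF
        subst hqeq
        obtain ⟨m'', hmsh⟩ := path_shape huv hmF
        subst hmsh
        have hndq := hndP' hqF
        have hu1 : u ∉ k1 := fun h => (List.disjoint_of_nodup_append hndq) h (by simp)
        have hs3 : split3 u (k1 ++ u :: v :: k2) = (k1, v :: k2) := split3_eq u _ hu1
        dsimp only
        rw [hs3]
        dsimp only
        rw [List.tail_cons]
        rw [show k1 ++ (u :: (m'' ++ [v])) ++ k2 = k1 ++ u :: (m'' ++ (v :: k2)) by simp]
        rw [Aux.pw_append_cons c k1 u (m'' ++ v :: k2)]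
        rw [show u :: (m'' ++ v :: k2) = (u :: m'') ++ v :: k2 by simp]
        rw [Aux.pw_append_cons c (u :: m'') v k2]
        rw [show (u :: m'') ++ [v] = u :: (m'' ++ [v]) by simp]
        ring
    calc pathSum E' c' y x
        = ∑ q ∈ hfinP'.toFinset, pathWeight c' q := key E' c' y x hfinP'
      _ = (∑ q ∈ hfinP'.toFinset.filter (fun q => ∃ k1 k2, q = k1 ++ u :: v :: k2),
            pathWeight c' q)
          + ∑ q ∈ hfinP'.toFinset.filter (fun q => ¬ ∃ k1 k2, q = k1 ++ u :: v :: k2),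
            pathWeight c' q := (Finset.sum_filter_add_sum_filter_not _ _ _).symm
      _ = (∑ q ∈ hfinP'.toFinset.filter (fun q => ∃ k1 k2, q = k1 ++ u :: v :: k2),
            pathWeight c ((split3 u q).1 ++ [u]) * S * pathWeight c ((split3 u q).2))
          + ∑ q ∈ hfinP'.toFinset.filter (fun q => ¬ ∃ k1 k2, q = k1 ++ u :: v :: k2),
            pathWeight c' q := by rw [Finset.sum_congr rfl heval]
      _ = (∑ q ∈ hfinP'.toFinset.filter (fun q => ∃ k1 k2, q = k1 ++ u :: v :: k2),
            ∑ m ∈ hfinM.toFinset,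
              pathWeight c ((split3 u q).1 ++ [u]) * pathWeight c m *
                pathWeight c ((split3 u q).2))
          + ∑ q ∈ hfinP'.toFinset.filter (fun q => ¬ ∃ k1 k2, q = k1 ++ u :: v :: k2),
            pathWeight c' q := by
          congr 1
          refine Finset.sum_congr rfl ?_
          intro q hq
          rw [hSsum, Finset.mul_sum, Finset.sum_mul]
      _ = (∑ z ∈ (hfinP'.toFinset.filter (fun q => ∃ k1 k2, q = k1 ++ u :: v :: k2)) ×ˢ
            hfinM.toFinset,
            pathWeight c ((split3 u z.1).1 ++ [u]) * pathWeight c z.2 *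
              pathWeight c ((split3 u z.1).2))
          + ∑ q ∈ hfinP'.toFinset.filter (fun q => ¬ ∃ k1 k2, q = k1 ++ u :: v :: k2),
            pathWeight c' q := by
          congr 1
          exact (Finset.sum_product' _ _ _).symm
      _ = (∑ p ∈ hfinP.toFinset.filter (fun p => ∃ k1 m' k2, p = k1 ++ u :: (m' ++ v :: k2)),
            pathWeight c p)
          + ∑ p ∈ hfinP.toFinset.filter (fun p => ¬ ∃ k1 m' k2, p = k1 ++ u :: (m' ++ v :: k2)),
            pathWeight c p := by rw [hbij, hcleansum]
      _ = ∑ p ∈ hfinP.toFinset, pathWeight c p := Finset.sum_filter_add_sum_filter_not _ _ _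
      _ = pathSum E c y x := (key E c y x hfinP).symm
end
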